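/- Let k be a field, C a coalgebra over k, and (Dᵢ)_{i∈ι} a family of subcoalgebras of C such that C is the internal direct sum of the Dᵢ (the Dᵢ are linearly independent as subspaces and their sum is C). Let Vᵢ, V′ᵢ ⊆ Dᵢ be k-subspaces for each i. Then (⨆ᵢ Vᵢ) ∨_C (⨆ᵢ V′ᵢ) = ⨆ᵢ { x ∈ Dᵢ : Δ(x) ∈ Vᵢ ⊗ Dᵢ + Dᵢ ⊗ V′ᵢ }, i.e., the wedge product in C of the direct sums equals the direct sum over i of the wedge products Vᵢ ∨_{Dᵢ} V′ᵢ computed in each Dᵢ. -/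

import Mathlib

open TensorProduct DirectSum

/-- The image of `V ⊗ W` in `C ⊗ C`, for subspaces `V, W` of `C`. -/
noncomputable def tensorImage {k C : Type*} [Field k] [AddCommGroup C] [Module k C]
    (V W : Submodule k C) : Submodule k (C ⊗[k] C) :=
  LinearMap.range (TensorProduct.map V.subtype W.subtype)

/-- The wedge product `V ∨ W = Δ⁻¹(V ⊗ C + C ⊗ W)` of two subspaces of a coalgebra `C`. -/
noncomputable def wedge {k C : Type*} [Field k] [AddCommGroup C] [Module k C] [Coalgebra k C]
    (V W : Submodule k C) : Submodule k C :=
  (tensorImage V ⊤ ⊔ tensorImage ⊤ W).comap (Coalgebra.comul (R := k) (A := C))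

section Aux

variable {k C : Type*} [Field k] [AddCommGroup C] [Module k C]

lemma range_map_le_tensorImage {X Y : Type*} [AddCommGroup X] [Module k X]
    [AddCommGroup Y] [Module k Y] {f : X →ₗ[k] C} {g : Y →ₗ[k] C} {A B : Submodule k C}
    (hf : LinearMap.range f ≤ A) (hg : LinearMap.range g ≤ B) :
    LinearMap.range (TensorProduct.map f g) ≤ tensorImage A B := by
  have hf' : f = A.subtype ∘ₗ f.codRestrict A (fun x => hf ⟨x, rfl⟩) := rfl
  have hg' : g = B.subtype ∘ₗ g.codRestrict B (fun x => hg ⟨x, rfl⟩) := rfl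
  rw [hf', hg', TensorProduct.map_comp]
  exact LinearMap.range_comp_le_range _ _

lemma tensorImage_mono {A A' B B' : Submodule k C} (hA : A ≤ A') (hB : B ≤ B') :
    tensorImage A B ≤ tensorImage A' B' :=
  range_map_le_tensorImage (by rw [Submodule.range_subtype]; exact hA)
    (by rw [Submodule.range_subtype]; exact hB)

lemma map_tmap_tensorImage_le {f g : C →ₗ[k] C} {A B A' B' : Submodule k C}
    (hA : Submodule.map f A ≤ A') (hB : Submodule.map g B ≤ B') :
    Submodule.map (TensorProduct.map f g) (tensorImage A B) ≤ tensorImage A' B' := by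
  rw [tensorImage, ← LinearMap.range_comp, ← TensorProduct.map_comp]
  refine range_map_le_tensorImage ?_ ?_
  · rwa [LinearMap.range_comp, Submodule.range_subtype]
  · rwa [LinearMap.range_comp, Submodule.range_subtype]

lemma tmap_eq_zero_on {f : C →ₗ[k] C} {E : Submodule k C}
    (hf : ∀ x ∈ E, f x = 0) {t : C ⊗[k] C} (ht : t ∈ tensorImage E E) :
    TensorProduct.map f f t = 0 := by
  obtain ⟨s, rfl⟩ := ht
  have h0 : f ∘ₗ E.subtype = (0 : E →ₗ[k] C) := by
    ext x; exact hf x x.2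
  have : TensorProduct.map f f ∘ₗ TensorProduct.map E.subtype E.subtype
      = TensorProduct.map (f ∘ₗ E.subtype) (f ∘ₗ E.subtype) := (TensorProduct.map_comp _ _ _ _).symm
  calc TensorProduct.map f f (TensorProduct.map E.subtype E.subtype s)
      = TensorProduct.map (f ∘ₗ E.subtype) (f ∘ₗ E.subtype) s := LinearMap.congr_fun this s
    _ = 0 := by rw [h0]; simp

lemma tmap_eq_id_on {f : C →ₗ[k] C} {E : Submodule k C}
    (hf : ∀ x ∈ E, f x = x) {t : C ⊗[k] C} (ht : t ∈ tensorImage E E) :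
    TensorProduct.map f f t = t := by
  obtain ⟨s, rfl⟩ := ht
  have h0 : f ∘ₗ E.subtype = E.subtype := by
    ext x; exact hf x x.2
  have : TensorProduct.map f f ∘ₗ TensorProduct.map E.subtype E.subtype
      = TensorProduct.map (f ∘ₗ E.subtype) (f ∘ₗ E.subtype) := (TensorProduct.map_comp _ _ _ _).symm
  calc TensorProduct.map f f (TensorProduct.map E.subtype E.subtype s)
      = TensorProduct.map (f ∘ₗ E.subtype) (f ∘ₗ E.subtype) s := LinearMap.congr_fun this s
    _ = TensorProduct.map E.subtype E.subtype s := by rw [h0]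

end Aux

/-- If `C` is the internal direct sum of subcoalgebras `Dᵢ` and `Vᵢ, V′ᵢ ⊆ Dᵢ`, then
`(⨁ᵢ Vᵢ) ∨_C (⨁ᵢ V′ᵢ) = ⨁ᵢ (Vᵢ ∨_{Dᵢ} V′ᵢ)`, where the wedge product in `Dᵢ` is
`{x ∈ Dᵢ | Δ x ∈ Vᵢ ⊗ Dᵢ + Dᵢ ⊗ V′ᵢ}`. -/
theorem wedge_directSum {k C : Type*} [Field k] [AddCommGroup C] [Module k C] [Coalgebra k C]
    {ι : Type*} (D : ι → Submodule k C)
    (hind : iSupIndep D) (hsup : (⨆ i, D i) = ⊤)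
    (hsub : ∀ i, D i ≤ (tensorImage (D i) (D i)).comap (Coalgebra.comul (R := k) (A := C)))
    (V V' : ι → Submodule k C) (hV : ∀ i, V i ≤ D i) (hV' : ∀ i, V' i ≤ D i) :
    wedge (⨆ i, V i) (⨆ i, V' i) =
      ⨆ i, (D i ⊓ (tensorImage (V i) (D i) ⊔ tensorImage (D i) (V' i)).comap
        (Coalgebra.comul (R := k) (A := C))) := by
  classical
  set Δ := Coalgebra.comul (R := k) (A := C) with hΔ
  have hInt : DirectSum.IsInternal D :=
    (DirectSum.isInternal_submodule_iff_iSupIndep_and_iSup_eq_top D).2 ⟨hind, hsup⟩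
  set e : C ≃ₗ[k] ⨁ i, D i :=
    (LinearEquiv.ofBijective (DirectSum.coeLinearMap D) hInt).symm with he
  -- the projections
  set π : ι → C →ₗ[k] C := fun i =>
    (D i).subtype ∘ₗ DirectSum.component k ι (fun i => D i) i ∘ₗ e.toLinearMap with hπ
  have hπ_apply : ∀ i (x : C), π i x = ((e x) i : C) := fun i x => rfl
  have hπ_mem : ∀ i x, π i x ∈ D i := fun i x => ((e x) i).2
  have hπ_same : ∀ i x, x ∈ D i → π i x = x := by
    intro i x hx
    rw [hπ_apply, he, hInt.ofBijective_coeLinearMap_of_mem hx]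
  have hπ_ne : ∀ i j x, x ∈ D j → i ≠ j → π i x = 0 := by
    intro i j x hx hij
    rw [hπ_apply, he]
    rw [hInt.ofBijective_coeLinearMap_of_mem_ne hij.symm hx]
    rfl
  -- x = sum of its components
  have hsum : ∀ x : C, x = ∑ i ∈ (e x).support, π i x := by
    intro x
    have h1 : (∑ i ∈ (e x).support, DirectSum.of (fun i => D i) i ((e x) i)) = e x :=
      DirectSum.sum_support_of _
    have h2 := congrArg e.symm h1
    rw [map_sum, e.symm_apply_apply] at h2
    have h3 : ∀ j, π j x = e.symm (DirectSum.of (fun i => D i) j ((e x) j)) := by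
      intro j
      rw [hπ_apply, he]
      exact (DirectSum.coeLinearMap_of _ _ _).symm
    exact h2.symm.trans (Finset.sum_congr rfl fun j _ => (h3 j).symm)
  -- maps of the sups under projections
  have hmapV : ∀ i, Submodule.map (π i) (⨆ j, V j) ≤ V i := by
    intro i
    rw [Submodule.map_iSup]
    refine iSup_le fun j => Submodule.map_le_iff_le_comap.2 fun v hv => ?_
    by_cases hij : i = j
    · subst hij
      simpa [Submodule.mem_comap, hπ_same i v (hV i hv)] using hv
    · simp [Submodule.mem_comap, hπ_ne i j v (hV j hv) hij]
  have hmapV' : ∀ i, Submodule.map (π i) (⨆ j, V' j) ≤ V' i := by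
    intro i
    rw [Submodule.map_iSup]
    refine iSup_le fun j => Submodule.map_le_iff_le_comap.2 fun v hv => ?_
    by_cases hij : i = j
    · subst hij
      simpa [Submodule.mem_comap, hπ_same i v (hV' i hv)] using hv
    · simp [Submodule.mem_comap, hπ_ne i j v (hV' j hv) hij]
  have hmapTop : ∀ i, Submodule.map (π i) ⊤ ≤ D i := by
    intro i
    rw [Submodule.map_top]
    rintro x ⟨y, rfl⟩
    exact hπ_mem i y
  apply le_antisymm
  · -- hard direction
    intro x hx
    rw [wedge, Submodule.mem_comap] at hx
    rw [hsum x]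
    refine Submodule.sum_mem _ fun i _ => ?_
    refine Submodule.mem_iSup_of_mem i (Submodule.mem_inf.mpr ⟨hπ_mem i x, ?_⟩)
    rw [Submodule.mem_comap]
    -- Δ (π i x) = (π i ⊗ π i) (Δ x)
    have key : Δ (π i x) = TensorProduct.map (π i) (π i) (Δ x) := by
      conv_rhs => rw [hsum x]
      rw [map_sum, map_sum]
      rw [Finset.sum_eq_single i]
      · exact (tmap_eq_id_on (hπ_same i) (hsub i (hπ_mem i x))).symm
      · intro j _ hj
        exact tmap_eq_zero_on (fun y hy => hπ_ne i j y hy (Ne.symm hj)) (hsub j (hπ_mem j x))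
      · intro hi
        simp only [Finset.mem_coe, DFinsupp.mem_support_iff, not_not] at hi
        have : π i x = 0 := by rw [hπ_apply, hi]; rfl
        rw [this, map_zero, map_zero]
    rw [key]
    have : TensorProduct.map (π i) (π i) (Δ x) ∈
        Submodule.map (TensorProduct.map (π i) (π i))
          (tensorImage (⨆ j, V j) ⊤ ⊔ tensorImage ⊤ (⨆ j, V' j)) :=
      Submodule.mem_map_of_mem hx
    refine SetLike.le_def.mp ?_ this
    rw [Submodule.map_sup]
    exact sup_le_sup (map_tmap_tensorImage_le (hmapV i) (hmapTop i))
      (map_tmap_tensorImage_le (hmapTop i) (hmapV' i))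
  · -- easy direction
    refine iSup_le fun i x hx => ?_
    obtain ⟨hxD, hxΔ⟩ := Submodule.mem_inf.mp hx
    exact Submodule.comap_mono (sup_le_sup (tensorImage_mono (le_iSup V i) le_top)
      (tensorImage_mono le_top (le_iSup V' i))) hxΔ
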